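/- Let k ≥ 1 and let 𝐭 be an index tuple containing each index of {0,...,k−1} at least once. If (a:b) is a string with indices from {0,...,k−2} such that the concatenation (a:b, 𝐭) satisfies the SIP, then heads(a:b, 𝐭) = heads(𝐭). -/

import Mathlib

/-- The Successor Infix Property: between any two equal indices of the tuple there is an
occurrence of their successor. -/
def SIP (t : List ℕ) : Prop :=
  ∀ a b : Fin t.length, a < b → t.get a = t.get b →
    ∃ c : Fin t.length, a < c ∧ c < b ∧ t.get c = t.get a + 1

/-- One swap of two adjacent distinct commuting indices (indices differing by ≥ 2). -/
def CommuteStep (t t' : List ℕ) : Prop :=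
  ∃ (u v : List ℕ) (x y : ℕ), x ≠ y ∧ x + 1 ≠ y ∧ y + 1 ≠ x ∧
    t = u ++ x :: y :: v ∧ t' = u ++ y :: x :: v

/-- Equivalence of index tuples: generated by swapping adjacent commuting indices. -/
def TupleEquiv : List ℕ → List ℕ → Prop := Relation.ReflTransGen CommuteStep

/-- The string `(a : b) = (a, a+1, ..., b)`. -/
def strTuple (a b : ℕ) : List ℕ := List.range' a (b + 1 - a)

/-- The tuple `(a_s : b_s, ..., a_1 : b_1)` built from a list of pairs of endpoints. -/
def buildCSF (ps : List (ℕ × ℕ)) : List ℕ :=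
  (ps.map fun p => strTuple p.1 p.2).flatten

/-- `ps` encodes a tuple in column standard form: each pair `(a_j, b_j)` has `a_j ≤ b_j`
and the heads `b_s > b_{s-1} > ... > b_1` are strictly decreasing. -/
def IsCSFDecomp (ps : List (ℕ × ℕ)) : Prop :=
  (∀ pr ∈ ps, pr.1 ≤ pr.2) ∧ List.Chain' (· > ·) (ps.map Prod.snd)

/-- The set of heads of an index tuple `t`: the right endpoints of the strings of the
column standard form of `t`. -/
def headsSet (t : List ℕ) : Set ℕ :=
  {h | ∃ ps, IsCSFDecomp ps ∧ TupleEquiv t (buildCSF ps) ∧ h ∈ ps.map Prod.snd}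

namespace HeadsAux

/-- the `{h, h+1}`-subword of `l` -/
def fp (h : ℕ) (l : List ℕ) : List ℕ := l.filter (fun x => x == h || x == h + 1)

lemma fp_append (h : ℕ) (u v : List ℕ) : fp h (u ++ v) = fp h u ++ fp h v :=
  List.filter_append _ _

lemma fp_commuteStep {u v : List ℕ} (h : ℕ) (hc : CommuteStep u v) : fp h u = fp h v := by
  obtain ⟨c, d, x, y, hxy, hx1, hy1, rfl, rfl⟩ := hc
  simp only [fp, List.filter_append, List.filter_cons]
  have hnot : ¬((x == h || x == h + 1) = true ∧ (y == h || y == h + 1) = true) := by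
    simp only [Bool.or_eq_true, beq_iff_eq]
    rintro ⟨(rfl | rfl), (rfl | rfl)⟩ <;> omega
  by_cases hx : (x == h || x == h + 1) = true <;>
    by_cases hy : (y == h || y == h + 1) = true <;>
    simp [hx, hy] at hnot ⊢

lemma fp_equiv {u v : List ℕ} (h : ℕ) (he : TupleEquiv u v) : fp h u = fp h v := by
  induction he with
  | refl => rfl
  | tail _ hstep ih => exact ih.trans (fp_commuteStep h hstep)

lemma tupleEquiv_append_left (c : List ℕ) {u v : List ℕ} (h : TupleEquiv u v) :
    TupleEquiv (c ++ u) (c ++ v) := by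
  refine Relation.ReflTransGen.lift (c ++ ·) (fun a b hab => ?_) _ _ h
  obtain ⟨u', v', x, y, h1, h2, h3, rfl, rfl⟩ := hab
  exact ⟨c ++ u', v', x, y, h1, h2, h3, by simp, by simp⟩

lemma tupleEquiv_cons (z : ℕ) {u v : List ℕ} (h : TupleEquiv u v) :
    TupleEquiv (z :: u) (z :: v) := tupleEquiv_append_left [z] h

/-- commute a small letter past a list of big letters -/
lemma commute_past (x : ℕ) (c v : List ℕ) (hc : ∀ y ∈ c, x + 1 < y) :
    TupleEquiv (x :: (c ++ v)) (c ++ x :: v) := by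
  induction c with
  | nil => exact Relation.ReflTransGen.refl
  | cons z c ih =>
    have hz : x + 1 < z := hc z (by simp)
    have step1 : CommuteStep (x :: z :: (c ++ v)) (z :: x :: (c ++ v)) :=
      ⟨[], c ++ v, x, z, by omega, by omega, by omega, rfl, rfl⟩
    refine Relation.ReflTransGen.head step1 ?_
    exact tupleEquiv_cons z (ih (fun y hy => hc y (by simp [hy])))

/-- the `{h,h+1}`-subword of a range' is explicit -/
lemma fp_range' (h : ℕ) : ∀ (n a : ℕ), fp h (List.range' a n) =
    (if a ≤ h ∧ h < a + n then [h] else []) ++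
    (if a ≤ h + 1 ∧ h + 1 < a + n then [h + 1] else []) := by
  intro n
  induction n with
  | zero => intro a; simp [fp]
  | succ n ih =>
    intro a
    rw [List.range'_succ]
    simp only [fp, List.filter_cons] at *
    by_cases h1 : a = h
    · subst h1
      simp only [beq_self_eq_true, Bool.true_or, if_pos]
      rw [ih]
      have e1 : ¬(a + 1 ≤ a ∧ a < a + 1 + n) := by omega
      have e2 : (a ≤ a ∧ a < a + (n+1)) := by omega
      have e3 : ((a + 1 ≤ a + 1 ∧ a + 1 < a + 1 + n) ↔ (a ≤ a + 1 ∧ a + 1 < a + (n+1))) := by omega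
      simp only [if_neg e1, if_pos e2, List.nil_append]
      by_cases h2 : a ≤ a + 1 ∧ a + 1 < a + (n+1)
      · rw [if_pos h2, if_pos (e3.mpr h2)]; rfl
      · rw [if_neg h2, if_neg (fun hc => h2 (e3.mp hc))]; rfl
    · by_cases h2 : a = h + 1
      · subst h2
        have : ((h + 1 == h || h + 1 == h + 1)) = true := by simp
        rw [if_pos this, ih]
        have e1 : ¬(h + 1 + 1 ≤ h ∧ h < h + 1 + 1 + n) := by omega
        have e2 : ¬(h + 1 + 1 ≤ h + 1 ∧ h + 1 < h + 1 + 1 + n) := by omega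
        have e3 : ¬(h + 1 ≤ h ∧ h < h + 1 + (n+1)) := by omega
        have e4 : (h + 1 ≤ h + 1 ∧ h + 1 < h + 1 + (n+1)) := by omega
        simp [e1, e2, e3, e4]
      · have : ((a == h || a == h + 1)) = false := by
          simp only [Bool.or_eq_false_iff, beq_eq_false_iff_ne]; exact ⟨h1, h2⟩
        rw [if_neg (by simp [this]), ih]
        have e1 : ((a + 1 ≤ h ∧ h < a + 1 + n) ↔ (a ≤ h ∧ h < a + (n+1))) := by omega
        have e2 : ((a + 1 ≤ h + 1 ∧ h + 1 < a + 1 + n) ↔ (a ≤ h + 1 ∧ h + 1 < a + (n+1))) := by omega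
        congr 1
        · by_cases hc : a + 1 ≤ h ∧ h < a + 1 + n
          · rw [if_pos hc, if_pos (e1.mp hc)]
          · rw [if_neg hc, if_neg (fun hx => hc (e1.mpr hx))]
        · by_cases hc : a + 1 ≤ h + 1 ∧ h + 1 < a + 1 + n
          · rw [if_pos hc, if_pos (e2.mp hc)]
          · rw [if_neg hc, if_neg (fun hx => hc (e2.mpr hx))]

lemma SIP_getElem {t : List ℕ} (h : SIP t) {i j : ℕ} (hij : i < j) (hj : j < t.length)
    (he : t[i]'(by omega) = t[j]'hj) :
    ∃ c, i < c ∧ c < j ∧ ∃ hc : c < t.length, t[c]'hc = t[i]'(by omega) + 1 := by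
  obtain ⟨c, h1, h2, h3⟩ := h ⟨i, by omega⟩ ⟨j, hj⟩ hij (by simpa using he)
  exact ⟨c, h1, h2, c.isLt, by simpa using h3⟩

lemma SIP.tail {x : ℕ} {l : List ℕ} (h : SIP (x :: l)) : SIP l := by
  intro a b hab heq
  have hj : (b : ℕ) + 1 < (x :: l).length := by simp
  have ha1 : (a : ℕ) + 1 < (x :: l).length := by simp
  have he : (x :: l)[(a : ℕ) + 1]'ha1 = (x :: l)[(b : ℕ) + 1]'hj := by
    rw [List.getElem_cons_succ, List.getElem_cons_succ]
    simpa using heq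
  have hab' : (a : ℕ) < (b : ℕ) := hab
  obtain ⟨c, h1, h2, hc, hval⟩ := SIP_getElem h (by omega) hj he
  obtain ⟨c', rfl⟩ : ∃ c', c = c' + 1 := ⟨c - 1, by omega⟩
  have hc' : c' < l.length := by simpa using hc
  refine ⟨⟨c', hc'⟩, by simpa [Fin.lt_def] using h1, by simpa [Fin.lt_def] using h2, ?_⟩
  simpa using hval

lemma SIP_suffix : ∀ (u : List ℕ) {v : List ℕ}, SIP (u ++ v) → SIP v := by
  intro u
  induction u with
  | nil => intro v h; exact h
  | cons z u ih => intro v h; exact ih (SIP.tail h)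

lemma head_filter_some {p : ℕ → Bool} : ∀ {l : List ℕ} {c : ℕ}, (l.filter p).head? = some c →
    ∃ u v, l = u ++ c :: v ∧ ∀ z ∈ u, p z = false := by
  intro l
  induction l with
  | nil => simp
  | cons z l ih =>
    intro c hc
    rw [List.filter_cons] at hc
    by_cases hz : p z = true
    · rw [if_pos hz] at hc
      simp only [List.head?_cons, Option.some.injEq] at hc
      subst hc
      exact ⟨[], l, rfl, by simp⟩
    · rw [if_neg hz] at hc
      obtain ⟨u, v, rfl, hu⟩ := ih hc
      refine ⟨z :: u, v, rfl, ?_⟩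
      intro w hw
      rcases List.mem_cons.mp hw with rfl | hw
      · exact Bool.eq_false_iff.mpr hz
      · exact hu w hw

lemma hx_of_SIP {x : ℕ} {l : List ℕ} (h : SIP (x :: l)) : (fp x l).head? ≠ some x := by
  intro hcon
  obtain ⟨u, v, rfl, hu⟩ := head_filter_some hcon
  have hj : u.length + 1 < (x :: (u ++ x :: v)).length := by simp
  have hval : (x :: (u ++ x :: v))[u.length + 1]'hj = x := by
    rw [List.getElem_cons_succ, List.getElem_append_right (le_refl u.length)]
    simp
  have he : (x :: (u ++ x :: v))[0]'(by simp) = (x :: (u ++ x :: v))[u.length + 1]'hj := by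
    rw [hval]; rfl
  obtain ⟨c, h1, h2, hc, hval2⟩ := SIP_getElem h (Nat.succ_pos _) hj he
  obtain ⟨c', rfl⟩ : ∃ c', c = c' + 1 := ⟨c - 1, by omega⟩
  have hcu : c' < u.length := by omega
  have : (x :: (u ++ x :: v))[c' + 1]'hc = u[c']'hcu := by
    rw [List.getElem_cons_succ, List.getElem_append_left hcu]
  rw [this] at hval2
  simp only [List.getElem_cons_zero] at hval2
  have hmem : u[c']'hcu ∈ u := List.getElem_mem _
  have := hu _ hmem
  rw [hval2] at this
  simp at this

lemma buildCSF_nil : buildCSF [] = [] := rfl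

lemma buildCSF_cons (p : ℕ × ℕ) (ps : List (ℕ × ℕ)) :
    buildCSF (p :: ps) = strTuple p.1 p.2 ++ buildCSF ps := by
  simp [buildCSF]

lemma fp_strTuple (h a b : ℕ) (hab : a ≤ b) : fp h (strTuple a b) =
    (if a ≤ h ∧ h ≤ b then [h] else []) ++ (if a ≤ h + 1 ∧ h + 1 ≤ b then [h + 1] else []) := by
  rw [strTuple, fp_range']
  have e1 : (a ≤ h ∧ h < a + (b + 1 - a)) ↔ (a ≤ h ∧ h ≤ b) := by omega
  have e2 : (a ≤ h + 1 ∧ h + 1 < a + (b + 1 - a)) ↔ (a ≤ h + 1 ∧ h + 1 ≤ b) := by omega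
  rw [if_congr e1 rfl rfl, if_congr e2 rfl rfl]

lemma mem_strTuple {y a b : ℕ} (hy : y ∈ strTuple a b) : a ≤ y ∧ y ≤ b := by
  rw [strTuple, List.mem_range'] at hy
  obtain ⟨i, hi, rfl⟩ := hy
  omega

lemma mem_buildCSF {y : ℕ} {ps : List (ℕ × ℕ)} (hy : y ∈ buildCSF ps) :
    ∃ p ∈ ps, p.1 ≤ y ∧ y ≤ p.2 := by
  rw [buildCSF, List.mem_flatten] at hy
  obtain ⟨l, hl, hyl⟩ := hy
  rw [List.mem_map] at hl
  obtain ⟨p, hp, rfl⟩ := hl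
  exact ⟨p, hp, mem_strTuple hyl⟩

lemma heads_lt_of_csf {a0 b0 : ℕ} {ps : List (ℕ × ℕ)}
    (h : IsCSFDecomp ((a0, b0) :: ps)) : ∀ y ∈ ps.map Prod.snd, y < b0 := by
  have := h.2
  unfold List.Chain' at this
  rw [List.map_cons, List.isChain_iff_pairwise, List.pairwise_cons] at this
  exact fun y hy => this.1 y hy

lemma csf_tail {p : ℕ × ℕ} {ps : List (ℕ × ℕ)} (h : IsCSFDecomp (p :: ps)) :
    IsCSFDecomp ps := by
  refine ⟨fun pr hpr => h.1 pr (List.mem_cons_of_mem _ hpr), ?_⟩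
  have := h.2
  rw [List.map_cons] at this
  exact this.tail

lemma heads_getLast (h : ℕ) : ∀ ps : List (ℕ × ℕ), IsCSFDecomp ps →
    (h ∈ ps.map Prod.snd ↔ (fp h (buildCSF ps)).getLast? = some h) := by
  intro ps
  induction ps with
  | nil => simp [buildCSF, fp]
  | cons p ps ih =>
    intro hcsf
    obtain ⟨a0, b0⟩ := p
    have hab : a0 ≤ b0 := hcsf.1 (a0, b0) List.mem_cons_self
    have hlt := heads_lt_of_csf hcsf
    have htl := csf_tail hcsf
    rw [buildCSF_cons, fp_append]
    by_cases hb0 : b0 = h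
    · subst hb0
      have hcol : fp b0 (strTuple a0 b0) = [b0] := by
        rw [fp_strTuple _ _ _ hab]
        have e1 : a0 ≤ b0 ∧ b0 ≤ b0 := ⟨hab, le_refl _⟩
        have e2 : ¬(a0 ≤ b0 + 1 ∧ b0 + 1 ≤ b0) := by omega
        rw [if_pos e1, if_neg e2]
        rfl
      have hrest : fp b0 (buildCSF ps) = [] := by
        rw [fp, List.filter_eq_nil_iff]
        intro y hy
        obtain ⟨q, hq, h1, h2⟩ := mem_buildCSF hy
        have : q.2 < b0 := hlt q.2 (List.mem_map_of_mem hq)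
        simp only [Bool.or_eq_true, beq_iff_eq, not_or]
        omega
      rw [hcol, hrest]
      simp
    · have hLHS : (b0 ∈ ((a0, b0) :: ps).map Prod.snd ↔ True) := by simp
      have hmem : h ∈ ((a0, b0) :: ps).map Prod.snd ↔ h ∈ ps.map Prod.snd := by
        simp only [List.map_cons, List.mem_cons]
        constructor
        · rintro (rfl | hx)
          · exact absurd rfl hb0
          · exact hx
        · exact Or.inr
      rw [hmem, ih htl]
      by_cases hr : fp h (buildCSF ps) = []
      · rw [hr, List.append_nil]
        have hcolne : (fp h (strTuple a0 b0)).getLast? ≠ some h := by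
          rw [fp_strTuple _ _ _ hab]
          by_cases hc1 : a0 ≤ h ∧ h ≤ b0
          · have hc2 : a0 ≤ h + 1 ∧ h + 1 ≤ b0 := by omega
            rw [if_pos hc1, if_pos hc2]
            simp
          · rw [if_neg hc1]
            by_cases hc2 : a0 ≤ h + 1 ∧ h + 1 ≤ b0
            · rw [if_pos hc2]; simp
            · rw [if_neg hc2]; simp
        simp only [List.getLast?_nil]
        exact ⟨fun hcon => absurd hcon (by simp), fun hcon => absurd hcon hcolne⟩
      · rw [List.getLast?_append]
        obtain ⟨y, hy⟩ := Option.ne_none_iff_exists'.mp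
          (fun hn => hr (List.getLast?_eq_none_iff.mp hn))
        rw [hy]
        simp [hy]

lemma strTuple_single (x : ℕ) : strTuple x x = [x] := by
  simp [strTuple]

lemma strTuple_cons {x b : ℕ} (h : x ≤ b) : strTuple x b = x :: strTuple (x + 1) b := by
  rw [strTuple, strTuple]
  have e1 : b + 1 - x = (b - x) + 1 := by omega
  have e2 : b + 1 - (x + 1) = b - x := by omega
  rw [e1, e2, List.range'_succ]

lemma insert_letter (x : ℕ) : ∀ ps : List (ℕ × ℕ), IsCSFDecomp ps →
    (fp x (buildCSF ps)).head? ≠ some x →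
    ∃ ps', IsCSFDecomp ps' ∧ TupleEquiv (x :: buildCSF ps) (buildCSF ps') ∧
      ∀ hh ∈ ps'.map Prod.snd, hh = x ∨ hh ∈ ps.map Prod.snd := by
  intro ps
  induction ps with
  | nil =>
    intro _ _
    refine ⟨[(x, x)], ⟨by simp, List.isChain_singleton _⟩, ?_, by simp⟩
    have : buildCSF [(x, x)] = [x] := by
      rw [buildCSF_cons]; simp [strTuple_single, buildCSF]
    rw [this]
    exact Relation.ReflTransGen.refl
  | cons p ps ih =>
    intro hcsf hx
    obtain ⟨a0, b0⟩ := p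
    have hab : a0 ≤ b0 := hcsf.1 _ List.mem_cons_self
    have hlt := heads_lt_of_csf hcsf
    have htl := csf_tail hcsf
    rcases lt_or_ge b0 x with hgt | hle
    · -- new column (x,x) in front
      refine ⟨(x, x) :: (a0, b0) :: ps, ⟨?_, ?_⟩, ?_, ?_⟩
      · intro pr hpr
        rcases List.mem_cons.mp hpr with rfl | h
        · exact le_refl _
        · exact hcsf.1 _ h
      · rw [List.map_cons]
        rw [List.map_cons] at *
        exact List.isChain_cons_cons.mpr ⟨hgt, hcsf.2⟩
      · have : buildCSF ((x, x) :: (a0, b0) :: ps) = x :: buildCSF ((a0, b0) :: ps) := by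
          rw [buildCSF_cons]
          simp [strTuple_single]
        rw [this]
        exact Relation.ReflTransGen.refl
      · intro hh hhm
        simp only [List.map_cons, List.mem_cons] at hhm ⊢
        tauto
    · rcases le_or_gt a0 x with hax | hxa
      · -- impossible: x occurs inside the first column
        exfalso
        apply hx
        rw [buildCSF_cons, fp_append, fp_strTuple _ _ _ hab, if_pos ⟨hax, hle⟩]
        simp
      · rcases eq_or_lt_of_le (Nat.succ_le_of_lt hxa) with heq | hlt2
        · -- extend the first column downwards
          refine ⟨(x, b0) :: ps, ⟨?_, ?_⟩, ?_, ?_⟩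
          · intro pr hpr
            rcases List.mem_cons.mp hpr with rfl | h
            · exact le_of_lt (lt_of_lt_of_le hxa hab)
            · exact hcsf.1 _ (List.mem_cons_of_mem _ h)
          · have := hcsf.2
            simpa using this
          · have : buildCSF ((x, b0) :: ps) = x :: buildCSF ((a0, b0) :: ps) := by
              rw [buildCSF_cons, buildCSF_cons]
              have hxb : x ≤ b0 := le_of_lt (lt_of_lt_of_le hxa hab)
              rw [strTuple_cons hxb]
              have heq' : x + 1 = a0 := heq
              rw [heq']
              simp
            rw [this]
            exact Relation.ReflTransGen.refl
          · intro hh hhm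
            simp only [List.map_cons, List.mem_cons] at hhm ⊢
            tauto
        · -- commute x past the first column and recurse
          have hcol : ∀ y ∈ strTuple a0 b0, x + 1 < y :=
            fun y hy => lt_of_lt_of_le hlt2 (mem_strTuple hy).1
          have hempty : fp x (strTuple a0 b0) = [] := by
            rw [fp_strTuple _ _ _ hab, if_neg (by omega), if_neg (by omega)]
            rfl
          have hx' : (fp x (buildCSF ps)).head? ≠ some x := by
            intro hcon
            apply hx
            rw [buildCSF_cons, fp_append, hempty]
            simpa using hcon
          obtain ⟨ps'', hc'', he'', hm''⟩ := ih htl hx'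
          refine ⟨(a0, b0) :: ps'', ⟨?_, ?_⟩, ?_, ?_⟩
          · intro pr hpr
            rcases List.mem_cons.mp hpr with rfl | h
            · exact hab
            · exact hc''.1 _ h
          · rw [List.map_cons]
            refine List.isChain_cons.mpr ?_
            refine ⟨?_, hc''.2⟩
            intro y hy
            have hym : y ∈ ps''.map Prod.snd := List.mem_of_mem_head? hy
            rcases hm'' y hym with rfl | hmem
            · omega
            · exact hlt y hmem
          · rw [buildCSF_cons, buildCSF_cons]
            refine Relation.ReflTransGen.trans (commute_past x _ _ hcol) ?_
            exact tupleEquiv_append_left _ he''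
          · intro hh hhm
            simp only [List.map_cons, List.mem_cons] at hhm ⊢
            rcases hhm with rfl | h
            · exact Or.inr (Or.inl rfl)
            · rcases hm'' hh h with h' | h'
              · exact Or.inl h'
              · exact Or.inr (Or.inr h')


lemma exists_csf : ∀ l : List ℕ, SIP l → ∃ ps, IsCSFDecomp ps ∧ TupleEquiv l (buildCSF ps) := by
  intro l
  induction l with
  | nil => exact fun _ => ⟨[], ⟨by simp, List.isChain_nil⟩, Relation.ReflTransGen.refl⟩
  | cons x l ih =>
    intro hs
    obtain ⟨ps, hcsf, hequiv⟩ := ih (SIP.tail hs)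
    have hfp : fp x l = fp x (buildCSF ps) := fp_equiv x hequiv
    have hx : (fp x (buildCSF ps)).head? ≠ some x := by
      rw [← hfp]; exact hx_of_SIP hs
    obtain ⟨ps', h1, h2, _⟩ := insert_letter x ps hcsf hx
    exact ⟨ps', h1, Relation.ReflTransGen.trans (tupleEquiv_cons x hequiv) h2⟩

lemma headsSet_eq {u : List ℕ} (hs : SIP u) :
    headsSet u = {h | (fp h u).getLast? = some h} := by
  obtain ⟨ps, hc, he⟩ := exists_csf u hs
  ext h
  constructor
  · rintro ⟨qs, hq, heq, hh⟩
    have := (heads_getLast h qs hq).mp hh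
    show (fp h u).getLast? = some h
    rw [fp_equiv h heq]
    exact this
  · intro hh
    refine ⟨ps, hc, he, (heads_getLast h ps hc).mpr ?_⟩
    rw [← fp_equiv h he]
    exact hh

end HeadsAux

open HeadsAux in
/-- Lemma: if `t` contains each index of `{0,…,k-1}` at least once and `(a:b)` is a string
with indices from `{0,…,k-2}` such that `(a:b, t)` satisfies the SIP, then
`heads(a:b, t) = heads(t)`. -/
theorem heads_string_append (k : ℕ) (hk : 1 ≤ k) (t : List ℕ)
    (ht : ∀ i ∈ t, i < k) (htall : ∀ i, i < k → i ∈ t)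
    (a b : ℕ) (hab : a ≤ b) (hb : b + 2 ≤ k)
    (hsip : SIP (strTuple a b ++ t)) :
    headsSet (strTuple a b ++ t) = headsSet t := by
  have hsipt : SIP t := SIP_suffix (strTuple a b) hsip
  rw [headsSet_eq hsip, headsSet_eq hsipt]
  ext h
  simp only [Set.mem_setOf_eq]
  rw [fp_append]
  by_cases hk : h < k
  · have hht : h ∈ t := htall h hk
    have hne : fp h t ≠ [] := by
      intro hcon
      rw [fp, List.filter_eq_nil_iff] at hcon
      exact hcon h hht (by simp)
    rw [List.getLast?_append]
    obtain ⟨y, hy⟩ := Option.ne_none_iff_exists'.mp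
      (fun hn => hne (List.getLast?_eq_none_iff.mp hn))
    rw [hy]
    simp
  · have hempty : fp h (strTuple a b) = [] := by
      rw [fp_strTuple _ _ _ hab, if_neg (by omega), if_neg (by omega)]
      rfl
    rw [hempty, List.nil_append]
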